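/- Weak duality holds for the signed Schrödinger problem: for every nonnegative array 𝐏 on the product index set satisfying all signed marginal constraints Σ_{k : k_ℓ = j} X_k 𝐏_k = p^{(ℓ)}_j, and for every collection of dual variables λ = (λ^{(ℓ)}_j), one has g(λ) ≤ S(𝐏, 𝐐), where g(λ) = −Σ_k 𝐐_k · exp(−X_k · Σ_ℓ λ^{(ℓ)}_{k_ℓ}) − Σ_ℓ Σ_j λ^{(ℓ)}_j · p^{(ℓ)}_j. -/
import Mathlib


open scoped BigOperators

lemma fenchel_key (a q u : ℝ) (ha : 0 ≤ a) (hq : 0 < q) :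
    a * u - q * Real.exp u ≤ a * (Real.log (a / q) - 1) := by
  rcases eq_or_lt_of_le ha with h | h
  · have hpos := Real.exp_pos u
    rw [← h]
    nlinarith
  · have hv : Real.exp (Real.log (a / q)) = a / q :=
      Real.exp_log (div_pos h hq)
    have h1 : (u - Real.log (a / q)) + 1 ≤ Real.exp (u - Real.log (a / q)) :=
      Real.add_one_le_exp _
    have h2 : q * Real.exp u = a * Real.exp (u - Real.log (a / q)) := by
      rw [show Real.exp u = Real.exp (Real.log (a / q)) * Real.exp (u - Real.log (a / q)) by
        rw [← Real.exp_add]; ring_nf, hv]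
      field_simp
    have h3 : a * ((u - Real.log (a / q)) + 1) ≤ q * Real.exp u := by
      rw [h2]
      exact mul_le_mul_of_nonneg_left h1 h.le
    nlinarith

/-- Weak duality for the signed Schrödinger problem: for every nonnegative
array `𝐏` satisfying all signed marginal constraints and every collection of dual
variables `λ`, one has `g(λ) ≤ S(𝐏, 𝐐)`. -/
theorem signed_schrodinger_weak_duality
    (n : ℕ) (hn : 1 ≤ n) (I : Fin n → Type)
    [∀ ℓ, Fintype (I ℓ)] [∀ ℓ, Nonempty (I ℓ)] [∀ ℓ, DecidableEq (I ℓ)]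
    (Q : (∀ ℓ, I ℓ) → ℝ) (hQ : ∀ k, 0 < Q k)
    (X : (∀ ℓ, I ℓ) → ℝ) (hX : ∀ k, X k = 1 ∨ X k = -1)
    (p : ∀ ℓ, I ℓ → ℝ)
    (P : (∀ ℓ, I ℓ) → ℝ) (hP : ∀ k, 0 ≤ P k)
    (hmarg : ∀ (ℓ : Fin n) (j : I ℓ),
      ∑ k : ∀ ℓ, I ℓ, (if k ℓ = j then X k * P k else 0) = p ℓ j)
    (lam : ∀ ℓ, I ℓ → ℝ) :
    (-(∑ k : ∀ ℓ, I ℓ, Q k * Real.exp (-(X k) * ∑ ℓ, lam ℓ (k ℓ)))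
        - ∑ ℓ, ∑ j, lam ℓ j * p ℓ j)
      ≤ ∑ k : ∀ ℓ, I ℓ, P k * (Real.log (P k / Q k) - 1) := by
  have hsum : ∑ ℓ, ∑ j, lam ℓ j * p ℓ j
      = ∑ k : ∀ ℓ, I ℓ, (X k * P k) * ∑ ℓ, lam ℓ (k ℓ) := by
    simp_rw [← hmarg, Finset.mul_sum, mul_ite, mul_zero]
    have step : ∀ ℓ : Fin n,
        (∑ j : I ℓ, ∑ k : ∀ ℓ, I ℓ, if k ℓ = j then lam ℓ j * (X k * P k) else 0)
          = ∑ k : ∀ ℓ, I ℓ, lam ℓ (k ℓ) * (X k * P k) := by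
      intro ℓ
      rw [Finset.sum_comm]
      refine Finset.sum_congr rfl fun k _ => ?_
      simp
    simp_rw [step]
    rw [Finset.sum_comm]
    refine Finset.sum_congr rfl fun k _ => ?_
    exact Finset.sum_congr rfl fun ℓ _ => by ring
    
  rw [hsum,
    show -(∑ k : ∀ ℓ, I ℓ, Q k * Real.exp (-(X k) * ∑ ℓ, lam ℓ (k ℓ)))
        - ∑ k : ∀ ℓ, I ℓ, (X k * P k) * ∑ ℓ, lam ℓ (k ℓ)
      = ∑ k : ∀ ℓ, I ℓ, (-(Q k * Real.exp (-(X k) * ∑ ℓ, lam ℓ (k ℓ)))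
          - (X k * P k) * ∑ ℓ, lam ℓ (k ℓ)) by
        rw [Finset.sum_sub_distrib, Finset.sum_neg_distrib]]
  apply Finset.sum_le_sum
  intro k _
  have h := fenchel_key (P k) (Q k) (-(X k) * ∑ ℓ, lam ℓ (k ℓ)) (hP k) (hQ k)
  nlinarith [h]
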